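/- Fix reals c, q, L > 0, D > 0 and Q₂ ∈ ℝ. If (x, y) ∈ B₂ then (x + k·q·y/L, y) ∈ B₂ for every k ∈ ℤ. -/

import Mathlib

open Real

noncomputable section

/-- the ellipse norm `‖(u₁,u₂)‖_@ = √(u₁² + c u₂²)`. -/
def nAt (c : ℝ) (u : ℝ × ℝ) : ℝ := Real.sqrt (u.1 ^ 2 + c * u.2 ^ 2)

/-- `Θ_x = √(x² + c q²)`. -/
def thetaAt (c q x : ℝ) : ℝ := Real.sqrt (x ^ 2 + c * q ^ 2)

/-- the set `B₂`. -/
def B2 (c q L D Q2 : ℝ) : Set (ℝ × ℝ) :=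
  {p | ∀ s i : ℤ, i ≠ 0 →
    D * q * |p.2| / thetaAt c q p.1 <
      nAt c
        (((s : ℝ) * q + (i : ℝ) * Q2) * p.1 * p.2 / (thetaAt c q p.1) ^ 2 -
            (i : ℝ) * L,
          ((s : ℝ) * q + (i : ℝ) * Q2) * q * p.2 / (thetaAt c q p.1) ^ 2)}

lemma cond_iff (c q x y β ζ A : ℝ) (hc : 0 < c) (hq : 0 < q) :
    A / thetaAt c q x <
      nAt c (β * x * y / (thetaAt c q x) ^ 2 - ζ,
             β * q * y / (thetaAt c q x) ^ 2) ↔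
    A < Real.sqrt ((β * y - ζ * x) ^ 2 + c * (ζ * q) ^ 2) := by
  have hpos : (0:ℝ) < x ^ 2 + c * q ^ 2 := by positivity
  have hθpos : 0 < thetaAt c q x := Real.sqrt_pos.mpr hpos
  have hθsq : (thetaAt c q x) ^ 2 = x ^ 2 + c * q ^ 2 := Real.sq_sqrt hpos.le
  set Θ := thetaAt c q x with hΘ
  rw [div_lt_iff₀ hθpos]
  have key : nAt c (β * x * y / Θ ^ 2 - ζ, β * q * y / Θ ^ 2) * Θ =
      Real.sqrt ((β * y - ζ * x) ^ 2 + c * (ζ * q) ^ 2) := by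
    rw [nAt, ← Real.sqrt_sq hθpos.le, ← Real.sqrt_mul (by positivity)]
    congr 1
    field_simp
    rw [hθsq]
    rw [show √(x ^ 2 + c * q ^ 2) ^ 4 = (√(x ^ 2 + c * q ^ 2) ^ 2) ^ 2 by ring, Real.sq_sqrt hpos.le]
    ring
  rw [key]

theorem statement12
    (c q L D Q2 : ℝ) (hc : 0 < c) (hq : 0 < q) (hL : 0 < L) (hD : 0 < D)
    (x y : ℝ) (hxy : (x, y) ∈ B2 c q L D Q2) (k : ℤ) :
    (x + (k : ℝ) * q * y / L, y) ∈ B2 c q L D Q2 := by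
  intro s i hi
  have h := hxy (s - i * k) i hi
  simp only [B2, Set.mem_setOf_eq] at h ⊢
  rw [cond_iff c q _ y _ _ _ hc hq] at h ⊢
  convert h using 3
  have hL' : L ≠ 0 := hL.ne'
  push_cast
  field_simp
  ring
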